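/- For the complete bipartite graph K_{a,n-a} on n vertices, F(K_{a,n-a}) = C(n,a), the binomial coefficient n choose a. -/

import Mathlib

def GDiff {V : Type*} (G : SimpleGraph V) (π σ : Equiv.Perm V) : Prop :=
  ∃ i, G.Adj (π i) (σ i)

noncomputable def famF {V : Type*} (G : SimpleGraph V) : ℕ :=
  sSup {k | ∃ S : Finset (Equiv.Perm V), S.card = k ∧
    (S : Set (Equiv.Perm V)).Pairwise (GDiff G)}

/-- The complete bipartite graph `K_{a, n-a}` on vertex set `Fin n`,
with parts `{i : i < a}` and `{i : a ≤ i}`. -/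
def Kbip (n a : ℕ) : SimpleGraph (Fin n) where
  Adj i j := ((i : ℕ) < a ∧ ¬ (j : ℕ) < a) ∨ ((j : ℕ) < a ∧ ¬ (i : ℕ) < a)
  symm := ⟨fun i j h => Or.symm h⟩
  loopless := ⟨fun i h => by rcases h with ⟨h1, h2⟩ | ⟨h1, h2⟩ <;> exact h2 h1⟩

open Finset

/-- The preimage under `π` of the small part, as an index set. -/
def Phi (n a : ℕ) (π : Equiv.Perm (Fin n)) : Finset (Fin n) :=
  univ.filter (fun i => (π i : ℕ) < a)

lemma gdiff_iff (n a : ℕ) (π σ : Equiv.Perm (Fin n)) :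
    GDiff (Kbip n a) π σ ↔ Phi n a π ≠ Phi n a σ := by
  unfold GDiff Phi
  simp only [Ne, Finset.ext_iff, mem_filter, mem_univ, true_and]
  push_neg
  constructor
  · rintro ⟨i, hadj⟩
    refine ⟨i, ?_⟩
    have h2 : (((π i : ℕ) < a ∧ ¬ (σ i : ℕ) < a) ∨ ((σ i : ℕ) < a ∧ ¬ (π i : ℕ) < a)) := hadj
    omega
  · rintro ⟨i, h⟩
    refine ⟨i, ?_⟩
    show (((π i : ℕ) < a ∧ ¬ (σ i : ℕ) < a) ∨ ((σ i : ℕ) < a ∧ ¬ (π i : ℕ) < a))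
    omega

def eA (n a : ℕ) (ha : a ≤ n) : {j : Fin n // (j : ℕ) < a} ≃ Fin a where
  toFun x := ⟨x.1, x.2⟩
  invFun j := ⟨⟨j.1, lt_of_lt_of_le j.2 ha⟩, j.2⟩
  left_inv x := rfl
  right_inv j := rfl

lemma cardA (n a : ℕ) (ha : a ≤ n) :
    Fintype.card {j : Fin n // (j : ℕ) < a} = a := by
  rw [Fintype.card_congr (eA n a ha), Fintype.card_fin]

lemma filter_lt_card (n a : ℕ) (ha : a ≤ n) :
    (univ.filter (fun j : Fin n => (j : ℕ) < a)).card = a := by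
  rw [← Fintype.card_subtype]
  exact cardA n a ha

lemma phi_card (n a : ℕ) (ha : a ≤ n) (π : Equiv.Perm (Fin n)) :
    (Phi n a π).card = a := by
  have h1 : Phi n a π
      = (univ.filter (fun j : Fin n => (j : ℕ) < a)).map π.symm.toEmbedding := by
    ext i
    simp only [Phi, mem_filter, mem_univ, true_and, mem_map, Equiv.coe_toEmbedding]
    constructor
    · intro h; exact ⟨π i, h, π.symm_apply_apply i⟩
    · rintro ⟨j, hj, rfl⟩; simpa using hj
  rw [h1, card_map, filter_lt_card n a ha]

lemma exists_perm (n a : ℕ) (ha : a ≤ n) (T : Finset (Fin n)) (hT : T.card = a) :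
    ∃ π : Equiv.Perm (Fin n), Phi n a π = T := by
  classical
  have c1 : Fintype.card {x : Fin n // x ∈ T} = a := by
    simp [Fintype.card_coe, hT]
  have c2 : Fintype.card {x : Fin n // (x : ℕ) < a} = a := cardA n a ha
  let e : {x : Fin n // x ∈ T} ≃ {x : Fin n // (x : ℕ) < a} :=
    Fintype.equivOfCardEq (c1.trans c2.symm)
  refine ⟨e.extendSubtype, ?_⟩
  ext i
  simp only [Phi, mem_filter, mem_univ, true_and]
  constructor
  · intro h
    by_contra hi
    exact e.extendSubtype_not_mem i hi h
  · intro h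
    exact e.extendSubtype_mem i h

theorem stmt1 (n a : ℕ) (ha : a ≤ n) : famF (Kbip n a) = n.choose a := by
  classical
  set K := {k | ∃ S : Finset (Equiv.Perm (Fin n)), S.card = k ∧
    (S : Set (Equiv.Perm (Fin n))).Pairwise (GDiff (Kbip n a))} with hK
  have hub : ∀ k ∈ K, k ≤ n.choose a := by
    rintro k ⟨S, hcard, hpair⟩
    have hinj : Set.InjOn (Phi n a) (S : Set (Equiv.Perm (Fin n))) := by
      intro x hx y hy hxy
      by_contra hne
      exact (gdiff_iff n a x y).mp (hpair hx hy hne) hxy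
    have h1 : (S.image (Phi n a)).card = S.card :=
      card_image_of_injOn hinj
    have h2 : S.image (Phi n a) ⊆ Finset.powersetCard a univ := by
      intro T hT
      rw [mem_image] at hT
      obtain ⟨π, _, rfl⟩ := hT
      rw [mem_powersetCard]
      exact ⟨subset_univ _, phi_card n a ha π⟩
    calc k = (S.image (Phi n a)).card := by rw [h1, hcard]
    _ ≤ (Finset.powersetCard a (univ : Finset (Fin n))).card := card_le_card h2
    _ = n.choose a := by rw [card_powersetCard, card_univ, Fintype.card_fin]
  have hmem : n.choose a ∈ K := by
    set g : Finset (Fin n) → Equiv.Perm (Fin n) := fun T =>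
      if h : T.card = a then (exists_perm n a ha T h).choose else 1 with hg
    have hgT : ∀ T : Finset (Fin n), T.card = a → Phi n a (g T) = T := by
      intro T hT
      rw [hg]
      simp only [hT, dif_pos]
      exact (exists_perm n a ha T hT).choose_spec
    refine ⟨(Finset.powersetCard a (univ : Finset (Fin n))).image g, ?_, ?_⟩
    · rw [card_image_of_injOn, card_powersetCard, card_univ, Fintype.card_fin]
      intro T hT T' hT' hTT'
      rw [Finset.mem_coe, mem_powersetCard] at hT hT'
      rw [← hgT T hT.2, ← hgT T' hT'.2, hTT']
    · intro x hx y hy hxy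
      rw [Finset.mem_coe, mem_image] at hx hy
      obtain ⟨T, hT, rfl⟩ := hx
      obtain ⟨T', hT', rfl⟩ := hy
      rw [mem_powersetCard] at hT hT'
      rw [gdiff_iff, hgT T hT.2, hgT T' hT'.2]
      intro h; exact hxy (by rw [h])
  have hbdd : BddAbove K := ⟨n.choose a, hub⟩
  exact le_antisymm (csSup_le ⟨n.choose a, hmem⟩ hub) (le_csSup hbdd hmem)
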